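/- For κ > ω₁, let Y = {x ∈ 2^κ : |x⁻¹(1)| ≤ ℵ₀} and X = Y ∪ {𝟏} with the subspace topology from 2^κ, where 𝟏 is the constant-one function. Then X is countably compact and has tightness t(X) = κ; moreover every free sequence in X has length at most ω₁, i.e., F(X) ≤ ω₁. -/

import Mathlib

open Set Cardinal TopologicalSpace

universe u

/-- `Y` is countably compact: every countable open cover has a finite subcover. -/
def CountablyCompact (Y : Type u) [TopologicalSpace Y] : Prop :=
  ∀ 𝒰 : Set (Set Y), 𝒰.Countable → (∀ u ∈ 𝒰, IsOpen u) → ⋃₀ 𝒰 = Set.univ →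
    ∃ 𝒱 ⊆ 𝒰, 𝒱.Finite ∧ ⋃₀ 𝒱 = Set.univ

/-- The tightness of `Y` is at most `κ`. -/
def TightnessLE (Y : Type u) [TopologicalSpace Y] (κ : Cardinal.{u}) : Prop :=
  ∀ (A : Set Y) (x : Y), x ∈ closure A → ∃ B ⊆ A, #B ≤ κ ∧ x ∈ closure B

/-- A free sequence in `Y` indexed by a well-ordered type `ι`. -/
def IsFreeSequence (Y : Type u) [TopologicalSpace Y] (ι : Type u) [LinearOrder ι]
    (x : ι → Y) : Prop :=
  ∀ j : ι, Disjoint (closure (x '' {i | i < j})) (closure (x '' {i | j ≤ i}))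

/-- `F(Y) ≤ κ`: every free sequence in `Y` has length at most `κ`. -/
def FreeSequencesLE (Y : Type u) [TopologicalSpace Y] (κ : Cardinal.{u}) : Prop :=
  ∀ (ι : Type u) [LinearOrder ι], WellFoundedLT ι →
    ∀ x : ι → Y, IsFreeSequence Y ι x → #ι ≤ κ

variable {ι : Type u}

/-- basic closure characterization in the product `ι → Bool`. -/
theorem mem_closure_pi_iff {z : ι → Bool} {S : Set (ι → Bool)} :
    z ∈ closure S ↔ ∀ F : Finset ι, ∃ s ∈ S, ∀ i ∈ F, s i = z i := by
  rw [mem_closure_iff]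
  constructor
  · intro h F
    have hopen : IsOpen {y : ι → Bool | ∀ i ∈ F, y i = z i} := by
      have : {y : ι → Bool | ∀ i ∈ F, y i = z i} = Set.pi ↑F (fun i => {z i}) := by
        ext y; simp [Set.mem_pi]
      rw [this]
      exact isOpen_set_pi F.finite_toSet (fun a _ => isOpen_discrete _)
    obtain ⟨s, hs⟩ := h _ hopen (by simp)
    exact ⟨s, hs.2, hs.1⟩
  · intro h o ho hz
    have : o ∈ nhds z := ho.mem_nhds hz
    rw [nhds_pi, Filter.mem_pi'] at this
    obtain ⟨I, t, ht, hsub⟩ := this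
    obtain ⟨s, hsS, hs⟩ := h I
    refine ⟨s, hsub ?_, hsS⟩
    intro i hi
    have := ht i
    rw [nhds_discrete, Filter.mem_pure] at this
    rw [hs i hi]; exact this

variable {X : Set (ι → Bool)}

theorem isClosed_discrete_pre (i : ι) : IsClosed {y : ι → Bool | y i = false} := by
  have : {y : ι → Bool | y i = false} = (fun y : ι → Bool => y i) ⁻¹' {false} := by
    ext y; simp
  rw [this]; exact IsClosed.preimage (continuous_apply i) (isClosed_discrete _)

theorem mem_closure_sub_iff {z : ↥X} {S : Set ↥X} :
    z ∈ closure S ↔ ∀ F : Finset ι, ∃ s ∈ S, ∀ i ∈ F, (s : ι → Bool) i = (z : ι → Bool) i := by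
  rw [closure_subtype, mem_closure_pi_iff]
  constructor
  · intro h F
    obtain ⟨s, hsS, hs⟩ := h F
    obtain ⟨q, hqS, rfl⟩ := hsS
    exact ⟨q, hqS, hs⟩
  · intro h F
    obtain ⟨q, hq, hmatch⟩ := h F
    exact ⟨q, ⟨q, hq, rfl⟩, hmatch⟩

theorem closure_supp_subset {T : Set ι} {S : Set (ι → Bool)}
    (h : ∀ s ∈ S, ∀ i, i ∉ T → s i = false) :
    ∀ z ∈ closure S, ∀ i, i ∉ T → z i = false := by
  intro z hz i hi
  have hcl : IsClosed {y : ι → Bool | y i = false} :=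
    isClosed_discrete_pre i
  have : closure S ⊆ {y : ι → Bool | y i = false} :=
    hcl.closure_subset_iff.mpr (fun s hs => h s hs i hi)
  exact this hz

theorem compact_supp {T : Set ι} : IsCompact {y : ι → Bool | ∀ i, i ∉ T → y i = false} := by
  have : IsClosed {y : ι → Bool | ∀ i, i ∉ T → y i = false} := by
    have : {y : ι → Bool | ∀ i, i ∉ T → y i = false} = ⋂ (i) (_ : i ∉ T), {y | y i = false} := by
      ext y; simp
    rw [this]
    exact isClosed_iInter fun i => isClosed_iInter fun _ =>
      isClosed_discrete_pre i
  exact this.isCompact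

/-- compact subsets of the subtype -/
theorem compact_sub {K : Set (ι → Bool)} (hK : IsCompact K) (hKX : K ⊆ X) :
    IsCompact ((Subtype.val) ⁻¹' K : Set ↥X) := by
  rw [Topology.IsEmbedding.isCompact_iff Topology.IsEmbedding.subtypeVal]
  have : Subtype.val '' ((Subtype.val : ↥X → ι → Bool) ⁻¹' K) = K := by
    rw [Subtype.image_preimage_coe]
    exact inter_eq_self_of_subset_right hKX
  rwa [this]


theorem memX {X : Set (ι → Bool)}
    (hX : X = {x | {i | x i = true}.Countable} ∪ {fun _ => true}) {y : ι → Bool} (hy : y ∈ X) :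
    {i | y i = true}.Countable ∨ y = fun _ => true := by
  rw [hX] at hy
  rcases hy with h | h
  · exact Or.inl h
  · exact Or.inr h

theorem part1 (X : Set (ι → Bool))
    (hX : X = {x | {i | x i = true}.Countable} ∪ {fun _ => true}) :
    CountablyCompact ↥X := by
  intro 𝒰 hcount hopen hcover
  by_contra hno
  push_neg at hno
  rcases 𝒰.eq_empty_or_nonempty with rfl | hne
  · exact (hno ∅ (by simp) (by simp)) hcover
  obtain ⟨f, rfl⟩ := hcount.exists_eq_range hne
  have hpick : ∀ n : ℕ, ∃ p : ↥X, p ∉ ⋃ k ∈ Finset.range (n+1), f k := by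
    intro n
    have hne' := hno (f '' (Finset.range (n+1) : Set ℕ))
      (image_subset_range _ _) ((Finset.range (n+1)).finite_toSet.image f)
    obtain ⟨p, hp⟩ : ∃ p : ↥X, p ∉ ⋃₀ (f '' (Finset.range (n+1) : Set ℕ)) := by
      by_contra hc; push_neg at hc; exact hne' (eq_univ_iff_forall.mpr hc)
    refine ⟨p, fun hmem => hp ?_⟩
    simp only [mem_iUnion] at hmem
    obtain ⟨k, hk, hmemk⟩ := hmem
    exact ⟨f k, ⟨k, by simpa using hk, rfl⟩, hmemk⟩
  choose p hp using hpick
  -- the union of the supports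
  set A : Set ι := ⋃ n, {i | (p n : ι → Bool) i = true ∧ (p n : ι → Bool) ≠ fun _ => true} with hA
  have hAc : A.Countable := by
    refine countable_iUnion fun n => ?_
    rcases memX hX (p n).2 with h | h
    · exact (h.mono (fun i hi => hi.1))
    · have he : {i | (p n : ι → Bool) i = true ∧ (p n : ι → Bool) ≠ fun _ => true} = ∅ := by
        ext i; simp [h]
      rw [he]; exact countable_empty
  set K : Set (ι → Bool) := {y | ∀ i, i ∉ A → y i = false} ∪ {fun _ => true} with hK
  have hKX : K ⊆ X := by
    rw [hX]
    rintro y (hy | hy)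
    · left
      have : {i | y i = true} ⊆ A := by
        intro i hi
        by_contra hiA
        have := hy i hiA
        rw [hi] at this; exact Bool.true_eq_false.mp this
      exact hAc.mono this
    · right; exact hy
  have hKcomp : IsCompact K := compact_supp.union (isCompact_singleton)
  have hCcomp : IsCompact ((Subtype.val) ⁻¹' K : Set ↥X) := compact_sub hKcomp hKX
  have hpK : ∀ n, p n ∈ ((Subtype.val) ⁻¹' K : Set ↥X) := by
    intro n
    by_cases h1 : (p n : ι → Bool) = fun _ => true
    · right; exact h1
    · left
      intro i hiA
      by_contra hb
      have hb' : (p n : ι → Bool) i = true := by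
        cases h : (p n : ι → Bool) i
        · exact absurd h hb
        · rfl
      exact hiA (mem_iUnion.mpr ⟨n, hb', h1⟩)
  have hCsub : ((Subtype.val) ⁻¹' K : Set ↥X) ⊆ ⋃ n, f n := by
    intro q _
    have : q ∈ ⋃₀ range f := hcover ▸ mem_univ q
    rcases this with ⟨u, ⟨n, rfl⟩, hq⟩
    exact mem_iUnion.mpr ⟨n, hq⟩
  obtain ⟨t, ht⟩ := hCcomp.elim_finite_subcover f (fun n => hopen _ ⟨n, rfl⟩) hCsub
  set N := t.sup id with hN
  have := ht (hpK N)
  simp only [mem_iUnion] at this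
  obtain ⟨k, hk, hmem⟩ := this
  refine hp N (mem_iUnion.mpr ⟨k, ?_⟩)
  simp only [mem_iUnion]
  exact ⟨Finset.mem_range.mpr (Nat.lt_succ_of_le (Finset.le_sup (f := id) hk)), hmem⟩

theorem part2 (X : Set (ι → Bool)) (κ : Cardinal.{u}) (hι : #ι = κ) (hκ : aleph 1 < κ) :
    TightnessLE ↥X κ := by
  have : Infinite ι := by
    rw [Cardinal.infinite_iff, hι]
    exact le_of_lt (lt_trans Cardinal.aleph0_lt_aleph_one hκ)
  intro A p hp
  have hall := (mem_closure_sub_iff).mp hp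
  choose g hgA hgm using hall
  refine ⟨range g, range_subset_iff.mpr hgA, ?_, ?_⟩
  · calc #(range g) ≤ #(Finset ι) := mk_range_le
      _ = #ι := mk_finset_of_infinite ι
      _ = κ := hι
  · exact (mem_closure_sub_iff).mpr fun F => ⟨g F, mem_range_self F, hgm F⟩

theorem part3 (X : Set (ι → Bool)) (κ : Cardinal.{u}) (hι : #ι = κ) (hκ : aleph 1 < κ)
    (hX : X = {x | {i | x i = true}.Countable} ∪ {fun _ => true}) :
    ∀ μ : Cardinal.{u}, μ < κ → ¬ TightnessLE ↥X μ := by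
  intro μ hμ ht
  classical
  have h0κ : (ℵ₀ : Cardinal) < κ := lt_trans Cardinal.aleph0_lt_aleph_one hκ
  have h1X : (fun _ => true : ι → Bool) ∈ X := by rw [hX]; exact Or.inr rfl
  set pt1 : ↥X := ⟨fun _ => true, h1X⟩ with hpt1
  set A : Set ↥X := {p : ↥X | {i | (p : ι → Bool) i = true}.Countable} with hAdef
  have h1A : pt1 ∈ closure A := by
    rw [mem_closure_sub_iff]
    intro F
    have hqX : (fun i => if i ∈ F then true else false : ι → Bool) ∈ X := by
      rw [hX]; left
      have : {i | (if i ∈ F then true else false) = true} = ↑F := by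
        ext i; simp
      simp only [mem_setOf_eq, this]
      exact F.countable_toSet
    refine ⟨⟨_, hqX⟩, ?_, ?_⟩
    · show {i | _}.Countable
      have : {i | (if i ∈ F then true else false) = true} = ↑F := by ext i; simp
      rw [this]; exact F.countable_toSet
    · intro i hi; simp [hi, hpt1]
  obtain ⟨B, hBA, hBcard, hB1⟩ := ht A pt1 h1A
  set T : Set ι := ⋃ b ∈ B, {i | (b : ι → Bool) i = true} with hT
  have hTcard : #T < #ι := by
    have h1 : #T ≤ #B * ⨆ b : B, #{i | (b : ι → Bool) i = true} := mk_biUnion_le _ _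
    have h2 : (⨆ b : B, #{i | (b : ι → Bool) i = true}) ≤ ℵ₀ := by
      apply ciSup_le'
      intro b
      have := hBA b.2
      rw [hAdef] at this
      exact (Cardinal.mk_le_aleph0_iff.mpr this.to_subtype)
    have h3 : #T ≤ μ * ℵ₀ :=
      le_trans h1 (mul_le_mul' hBcard h2)
    rw [hι]
    exact lt_of_le_of_lt h3 (Cardinal.mul_lt_of_lt (le_of_lt h0κ) hμ h0κ)
  obtain ⟨i₀, hi₀⟩ : ∃ i₀, i₀ ∉ T := by
    by_contra hc; push_neg at hc
    have he : T = (Set.univ : Set ι) := eq_univ_iff_forall.mpr hc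
    rw [he, mk_univ] at hTcard
    exact lt_irrefl _ hTcard
  obtain ⟨q, hqB, hqm⟩ := (mem_closure_sub_iff).mp hB1 {i₀}
  have : (q : ι → Bool) i₀ = true := by
    have := hqm i₀ (Finset.mem_singleton_self i₀)
    rw [this]
  exact hi₀ (mem_iUnion₂.mpr ⟨q, hqB, this⟩)

theorem not_mem_closure_sep {X : Set (ι → Bool)} {z : ↥X} {S : Set ↥X}
    (h : z ∉ closure S) :
    ∃ F : Finset ι, ∀ s ∈ S, ∃ i ∈ F, (s : ι → Bool) i ≠ (z : ι → Bool) i := by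
  rw [mem_closure_sub_iff] at h
  push_neg at h
  obtain ⟨F, hF⟩ := h
  exact ⟨F, fun s hs => (hF s hs).imp (fun i hi => ⟨hi.1, hi.2⟩)⟩

theorem exists_cluster {X : Set (ι → Bool)}
    (hX : X = {x | {i | x i = true}.Countable} ∪ {fun _ => true})
    (q : ℕ → ↥X) (hq : ∀ n, (q n : ι → Bool) ≠ fun _ => true) :
    ∃ z : ↥X, (∀ m : ℕ, z ∈ closure (q '' Set.Ici m)) ∧
      (∀ i, (z : ι → Bool) i = true → ∃ n, (q n : ι → Bool) i = true) := by
  set A : Set ι := ⋃ n, {i | (q n : ι → Bool) i = true} with hA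
  have hAc : A.Countable := countable_iUnion fun n =>
    (memX hX (q n).2).resolve_right (hq n)
  set K : Set (ι → Bool) := {y | ∀ i, i ∉ A → y i = false} with hK
  have hKX : K ⊆ X := by
    rw [hX]
    intro y hy
    left
    refine hAc.mono (fun i hi => ?_)
    by_contra hiA
    have := hy i hiA
    rw [mem_setOf_eq] at hi
    rw [hi] at this
    exact Bool.true_eq_false.mp this
  have hKcomp : IsCompact ((Subtype.val) ⁻¹' K : Set ↥X) := compact_sub compact_supp hKX
  have hqK : ∀ n, q n ∈ ((Subtype.val) ⁻¹' K : Set ↥X) := by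
    intro n i hiA
    by_contra hb
    have hb' : (q n : ι → Bool) i = true := by
      cases h : (q n : ι → Bool) i
      · exact absurd h hb
      · rfl
    exact hiA (mem_iUnion.mpr ⟨n, hb'⟩)
  have hle : Filter.map q Filter.atTop ≤ Filter.principal ((Subtype.val) ⁻¹' K : Set ↥X) := by
    rw [Filter.le_principal_iff, Filter.mem_map]
    exact Filter.Eventually.of_forall hqK
  obtain ⟨z, hzK, hcl⟩ := hKcomp.exists_clusterPt hle
  refine ⟨z, ?_, ?_⟩
  · intro m
    rw [mem_closure_iff_clusterPt]
    refine hcl.mono ?_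
    rw [Filter.le_principal_iff, Filter.mem_map]
    filter_upwards [Filter.Ici_mem_atTop m] with n hn
    exact ⟨n, hn, rfl⟩
  · intro i hi
    by_contra hc
    push_neg at hc
    have : i ∉ A := by
      intro hmem
      obtain ⟨n, hn⟩ := mem_iUnion.mp hmem
      exact hc n hn
    have := hzK i this
    rw [hi] at this
    exact Bool.true_eq_false.mp this
theorem part4 (X : Set (ι → Bool))
    (hX : X = {x | {i | x i = true}.Countable} ∪ {fun _ => true}) :
    FreeSequencesLE ↥X (aleph 1) := by
  classical
  intro ι' _ hwf x hfree
  by_contra hgt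
  -- Step A : prune the constant-one point
  set one : ι → Bool := fun _ => true with hone
  have hsub : {j : ι' | (x j : ι → Bool) = one}.Subsingleton := by
    intro j₁ h₁ j₂ h₂
    by_contra hne
    rcases lt_or_gt_of_ne hne with hlt | hlt
    · have m1 : x j₁ ∈ closure (x '' {i | i < j₂}) := subset_closure ⟨j₁, hlt, rfl⟩
      have m2 : x j₁ ∈ closure (x '' {i | j₂ ≤ i}) := by
        have : x j₁ = x j₂ := Subtype.ext (h₁.trans h₂.symm)
        rw [this]
        exact subset_closure ⟨j₂, le_refl _, rfl⟩
      exact Set.disjoint_left.mp (hfree j₂) m1 m2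
    · have m1 : x j₂ ∈ closure (x '' {i | i < j₁}) := subset_closure ⟨j₂, hlt, rfl⟩
      have m2 : x j₂ ∈ closure (x '' {i | j₁ ≤ i}) := by
        have : x j₂ = x j₁ := Subtype.ext (h₂.trans h₁.symm)
        rw [this]
        exact subset_closure ⟨j₁, le_refl _, rfl⟩
      exact Set.disjoint_left.mp (hfree j₁) m1 m2
  set I2 : Set ι' := {j : ι' | (x j : ι → Bool) ≠ one} with hI2
  have hbig : aleph 1 < #I2 := by
    by_contra hle
    push_neg at hle
    apply hgt
    have h1 : #({j : ι' | (x j : ι → Bool) = one} : Set ι') ≤ 1 :=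
      mk_le_one_iff_set_subsingleton.mpr hsub
    have h2 : #ι' = #I2 + #({j : ι' | (x j : ι → Bool) = one} : Set ι') := by
      have : I2ᶜ = {j : ι' | (x j : ι → Bool) = one} := by
        ext j; simp [hI2]
      rw [← this, mk_sum_compl]
    rw [h2]
    calc #I2 + #({j : ι' | (x j : ι → Bool) = one} : Set ι') ≤ aleph 1 + 1 :=
          add_le_add hle h1
      _ = aleph 1 := by
          apply add_one_eq
          exact le_of_lt (lt_of_le_of_lt (le_refl _)
            (lt_of_lt_of_le aleph0_lt_aleph_one (le_refl _)))
  have hne2 : Nonempty ↥I2 := by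
    rw [← mk_ne_zero_iff]
    intro h0
    rw [h0] at hbig
    exact absurd ((Cardinal.zero_le _).trans_lt hbig) (lt_irrefl 0)
  -- the free subsequence on I2
  set x2 : ↥I2 → ↥X := fun j => x j.1 with hx2
  have hfree2 : ∀ j : ↥I2,
      Disjoint (closure (x2 '' {i | i < j})) (closure (x2 '' {i | j ≤ i})) := by
    intro j
    refine Disjoint.mono (closure_mono ?_) (closure_mono ?_) (hfree j.1)
    · rintro - ⟨i, hi, rfl⟩; exact ⟨i.1, hi, rfl⟩
    · rintro - ⟨i, hi, rfl⟩; exact ⟨i.1, hi, rfl⟩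
  -- Step B : ordinal indexing
  set o : Ordinal.{u} := Ordinal.type ((· < ·) : ↥I2 → ↥I2 → Prop) with ho
  set ω₂ : Ordinal.{u} := (aleph 2).ord with hω₂
  have haleph2 : aleph 2 = Order.succ (aleph 1) := by
    have h12 : (2 : Ordinal) = Order.succ 1 := by
      rw [← Ordinal.add_one_eq_succ, one_add_one_eq_two]
    rw [h12, aleph_succ]
  have hω₂o : ω₂ ≤ o := by
    rw [hω₂, Cardinal.ord_le, ho, Ordinal.card_type, haleph2, Order.succ_le_iff]
    exact hbig
  set e : Ordinal.{u} → ↥I2 := fun β =>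
    if h : β < o then Ordinal.enum (· < ·) ⟨β, h⟩ else Classical.arbitrary _ with he
  have he_lt : ∀ {β γ : Ordinal}, β < ω₂ → γ < ω₂ → β < γ → e β < e γ := by
    intro β γ hβ hγ hlt
    have hβo : β < o := lt_of_lt_of_le hβ hω₂o
    have hγo : γ < o := lt_of_lt_of_le hγ hω₂o
    simp only [he, dif_pos hβo, dif_pos hγo]
    exact Ordinal.enum_lt_enum.mpr (Subtype.mk_lt_mk.mpr hlt)
  have he_le : ∀ {β γ : Ordinal}, β < ω₂ → γ < ω₂ → β ≤ γ → e β ≤ e γ := by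
    intro β γ hβ hγ hle
    rcases eq_or_lt_of_le hle with rfl | hlt
    · exact le_refl _
    · exact le_of_lt (he_lt hβ hγ hlt)
  set a : Ordinal.{u} → ↥X := fun β => x2 (e β) with ha
  set asupp : Ordinal.{u} → Set ι := fun β => {i | (a β : ι → Bool) i = true} with hasuppdef
  have hasupp : ∀ β, (asupp β).Countable := fun β =>
    (memX hX (a β).2).resolve_right (e β).2
  set T : Ordinal.{u} → Set ι := fun η => ⋃ β ∈ Set.Iio η, asupp β with hT
  have hTmono : ∀ {η₁ η₂ : Ordinal}, η₁ ≤ η₂ → T η₁ ⊆ T η₂ := by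
    intro η₁ η₂ hle i hi
    obtain ⟨β, hβ, hmem⟩ := mem_iUnion₂.mp hi
    exact mem_iUnion₂.mpr ⟨β, lt_of_lt_of_le hβ hle, hmem⟩
  have hTcard : ∀ η : Ordinal, η < ω₂ → #(T η) ≤ aleph 1 := by
    intro η hη
    have hcard : η.card ≤ aleph 1 := by
      rw [← Order.lt_succ_iff, ← haleph2, ← Cardinal.lt_ord, ← hω₂]
      exact hη
    have hrw : T η = ⋃ w : η.ToType, asupp ((Ordinal.ToType.mk (o := η)).symm w).1 := by
      apply Set.Subset.antisymm
      · intro i hi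
        obtain ⟨β, hβ, hmem⟩ := mem_iUnion₂.mp hi
        refine mem_iUnion.mpr ⟨Ordinal.ToType.mk (o := η) ⟨β, hβ⟩, ?_⟩
        rw [OrderIso.symm_apply_apply]
        exact hmem
      · intro i hi
        obtain ⟨w, hmem⟩ := mem_iUnion.mp hi
        exact mem_iUnion₂.mpr ⟨_, ((Ordinal.ToType.mk (o := η)).symm w).2, hmem⟩
    rw [hrw]
    calc #(⋃ w : η.ToType, asupp ((Ordinal.ToType.mk (o := η)).symm w).1)
        ≤ #η.ToType * ⨆ w : η.ToType, #(asupp ((Ordinal.ToType.mk (o := η)).symm w).1) :=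
          mk_iUnion_le _
      _ ≤ aleph 1 * ℵ₀ := by
          apply mul_le_mul'
          · rw [Cardinal.mk_toType]; exact hcard
          · exact ciSup_le' fun w => mk_le_aleph0_iff.mpr (hasupp _).to_subtype
      _ ≤ aleph 1 * aleph 1 := mul_le_mul' (le_refl _) (le_of_lt aleph0_lt_aleph_one)
      _ = aleph 1 := mul_eq_self (le_of_lt aleph0_lt_aleph_one)
  -- cluster points at countable-cofinality limits
  have hzdata : ∀ δ : Ordinal.{u}, δ < ω₂ →
      (∃ c : ℕ → Ordinal.{u}, StrictMono c ∧ (∀ n, c n < δ) ∧ (∀ η, η < δ → ∃ n, η ≤ c n)) →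
      ∃ (z : ↥X) (F : Finset ι),
        (∀ η, η < δ → z ∈ closure (a '' {β | η ≤ β ∧ β < δ})) ∧
        (∀ i, (z : ι → Bool) i = true → i ∈ T δ) ∧
        (∀ j : ↥I2, e δ ≤ j → ∃ i ∈ F, ((x2 j) : ι → Bool) i ≠ (z : ι → Bool) i) := by
    rintro δ hδ ⟨c, hcmono, hclt, hccof⟩
    obtain ⟨z, hz1, hz2⟩ := exists_cluster hX (fun n => a (c n)) (fun n => (e (c n)).2)
    have hzin : ∀ η, η < δ → z ∈ closure (a '' {β | η ≤ β ∧ β < δ}) := by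
      intro η hη
      obtain ⟨m, hm⟩ := hccof η hη
      refine closure_mono ?_ (hz1 m)
      rintro - ⟨n, hn, rfl⟩
      exact ⟨c n, ⟨le_trans hm (hcmono.monotone hn), hclt n⟩, rfl⟩
    have hzsupp : ∀ i, (z : ι → Bool) i = true → i ∈ T δ := by
      intro i hi
      obtain ⟨n, hn⟩ := hz2 i hi
      exact mem_iUnion₂.mpr ⟨c n, hclt n, hn⟩
    have hδ0 : (0 : Ordinal) < δ := lt_of_le_of_lt zero_le (hclt 0)
    have hzinit : z ∈ closure (x2 '' {i | i < e δ}) := by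
      refine closure_mono ?_ (hzin 0 hδ0)
      rintro - ⟨β, ⟨-, hβδ⟩, rfl⟩
      exact ⟨e β, he_lt (lt_trans hβδ hδ) hδ hβδ, rfl⟩
    have hztail : z ∉ closure (x2 '' {i | e δ ≤ i}) :=
      Set.disjoint_left.mp (hfree2 (e δ)) hzinit
    obtain ⟨F, hF⟩ := not_mem_closure_sep hztail
    exact ⟨z, F, hzin, hzsupp, fun j hj => hF (x2 j) ⟨j, hj, rfl⟩⟩
  set IsD : Ordinal.{u} → Prop := fun δ => δ < ω₂ ∧
      ∃ c : ℕ → Ordinal.{u}, StrictMono c ∧ (∀ n, c n < δ) ∧ (∀ η, η < δ → ∃ n, η ≤ c n)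
      with hIsD
  haveI : Nonempty ↥X := ⟨⟨one, by rw [hX]; exact Or.inr rfl⟩⟩
  have hzdata' : ∀ δ : Ordinal.{u}, IsD δ →
      ∃ (z : ↥X) (F : Finset ι),
        (∀ η, η < δ → z ∈ closure (a '' {β | η ≤ β ∧ β < δ})) ∧
        (∀ i, (z : ι → Bool) i = true → i ∈ T δ) ∧
        (∀ j : ↥I2, e δ ≤ j → ∃ i ∈ F, ((x2 j) : ι → Bool) i ≠ (z : ι → Bool) i) :=
    fun δ h => hzdata δ h.1 h.2
  choose! zf Ff hz1 hz2 hz3 using hzdata'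
  set P : Ordinal.{u} → Finset ι := fun δ => (Ff δ).filter (fun i => (zf δ : ι → Bool) i = true)
    with hP
  set Z : Ordinal.{u} → Finset ι := fun δ => (Ff δ).filter (fun i => (zf δ : ι → Bool) i = false)
    with hZ
  have hregular : (aleph 2).IsRegular := by
    have h12 : (2 : Ordinal) = Order.succ 1 := by
      rw [← Ordinal.add_one_eq_succ, one_add_one_eq_two]
    rw [h12]
    exact isRegular_aleph_succ 1
  have hcof : ω₂.cof = aleph 2 := by rw [hω₂]; exact hregular.cof_eq
  have homega2limit : Order.IsSuccLimit ω₂ := by rw [hω₂]; exact isSuccLimit_ord (aleph0_le_aleph 2)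
  have h02 : (ℵ₀ : Cardinal) < aleph 2 := by
    rw [haleph2]
    exact lt_trans aleph0_lt_aleph_one (Order.lt_succ _)
  have h12' : aleph 1 < aleph 2 := by rw [haleph2]; exact Order.lt_succ _
  have hsupN : ∀ f : ℕ → Ordinal.{u}, (∀ n, f n < ω₂) → (⨆ n, f n) < ω₂ := by
    intro f hf
    apply Ordinal.iSup_lt_ord_lift ?_ hf
    rw [hcof]
    have hn : Cardinal.lift.{u, 0} #ℕ = ℵ₀ := by simp
    rw [hn]
    exact h02
  -- pressing-down to an unbounded set with P ⊆ T η*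
  have hpress1 : ∃ ηs : Ordinal.{u}, ηs < ω₂ ∧
      ∀ β, β < ω₂ → ∃ δ, IsD δ ∧ β ≤ δ ∧ ↑(P δ) ⊆ T ηs := by
    by_contra hcon
    push_neg at hcon
    choose! b hb1 hb2 using hcon
    set d : ℕ → Ordinal.{u} :=
      fun n => Nat.rec (motive := fun _ => Ordinal.{u}) 1 (fun _ prev => max (b prev) prev + 1) n
      with hd
    have hdsucc : ∀ n, d (n+1) = max (b (d n)) (d n) + 1 := fun n => rfl
    have hdlt : ∀ n, d n < ω₂ := by
      intro n; induction n with
      | zero => exact Ordinal.one_lt_of_isSuccLimit homega2limit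
      | succ n ih =>
        rw [hdsucc, Ordinal.add_one_eq_succ]
        exact homega2limit.succ_lt (max_lt (hb1 _ ih) ih)
    have hdmono : StrictMono d := strictMono_nat_of_lt_succ (by
      intro n
      rw [hdsucc, Ordinal.add_one_eq_succ]
      exact lt_of_le_of_lt (le_max_right _ _) (Order.lt_succ _))
    set δs : Ordinal.{u} := ⨆ n, d n with hδs
    have hδslt : δs < ω₂ := hsupN d hdlt
    have hdle : ∀ n, d n ≤ δs := Ordinal.le_iSup d
    have hδsD : IsD δs := by
      refine ⟨hδslt, d, hdmono, ?_, ?_⟩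
      · exact fun n => lt_of_lt_of_le (hdmono (Nat.lt_succ_self n)) (hdle (n+1))
      · intro η hη
        obtain ⟨n, hn⟩ := Ordinal.lt_iSup_iff.mp hη
        exact ⟨n, le_of_lt hn⟩
    have hPT : ∀ i ∈ P δs, ∃ n : ℕ, i ∈ T (d n) := by
      intro i hi
      have hzi : (zf δs : ι → Bool) i = true := (Finset.mem_filter.mp hi).2
      obtain ⟨β, hβ, hmem⟩ := mem_iUnion₂.mp (hz2 δs hδsD i hzi)
      obtain ⟨n, hn⟩ := Ordinal.lt_iSup_iff.mp hβ
      exact ⟨n, mem_iUnion₂.mpr ⟨β, hn, hmem⟩⟩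
    choose g hg using hPT
    set N : ℕ := (P δs).attach.sup (fun i => g i.1 i.2) with hN
    have hPsub : ↑(P δs) ⊆ T (d N) := by
      intro i hi
      refine hTmono (hdmono.monotone ?_) (hg i hi)
      exact Finset.le_sup (f := fun i : {y // y ∈ P δs} => g i.1 i.2) (Finset.mem_attach _ ⟨i, hi⟩)
    have hble : b (d N) ≤ δs := by
      refine le_of_lt (lt_of_lt_of_le ?_ (hdle (N+1)))
      calc b (d N) ≤ max (b (d N)) (d N) := le_max_left _ _
        _ < d (N+1) := by rw [hdsucc, Ordinal.add_one_eq_succ]; exact Order.lt_succ _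
    exact hb2 (d N) (hdlt N) δs hδsD hble hPsub
  obtain ⟨ηs, hηs, hUnb⟩ := hpress1
  -- the possible values of P form a family of size ≤ ℵ₁
  set V : Set (Finset ι) := {G : Finset ι | ↑G ⊆ T ηs} with hV
  have hVcard : #V ≤ aleph 1 := by
    have hinj : Function.Injective (fun G : ↥V => G.1.subtype (· ∈ T ηs)) := by
      intro G₁ G₂ hGe
      apply Subtype.ext
      apply Finset.ext
      intro i
      simp only at hGe
      constructor
      · intro hi
        have hiT : i ∈ T ηs := G₁.2 hi
        have hmem : (⟨i, hiT⟩ : {y // y ∈ T ηs}) ∈ G₁.1.subtype (· ∈ T ηs) :=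
          Finset.mem_subtype.mpr hi
        rw [hGe] at hmem
        exact Finset.mem_subtype.mp hmem
      · intro hi
        have hiT : i ∈ T ηs := G₂.2 hi
        have hmem : (⟨i, hiT⟩ : {y // y ∈ T ηs}) ∈ G₂.1.subtype (· ∈ T ηs) :=
          Finset.mem_subtype.mpr hi
        rw [← hGe] at hmem
        exact Finset.mem_subtype.mp hmem
    calc #V ≤ #(Finset ↥(T ηs)) := mk_le_of_injective hinj
      _ ≤ #(Multiset ↥(T ηs)) := mk_le_of_injective Finset.val_injective
      _ ≤ #(List ↥(T ηs)) := mk_quotient_le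
      _ ≤ max ℵ₀ #(T ηs) := mk_list_le_max _
      _ ≤ aleph 1 := max_le (le_of_lt aleph0_lt_aleph_one) (hTcard ηs hηs)
  -- constant value of P on an unbounded set
  have hpress2 : ∃ Ps : Finset ι, ∀ β, β < ω₂ →
      ∃ δ, IsD δ ∧ β ≤ δ ∧ ↑(P δ) ⊆ T ηs ∧ P δ = Ps := by
    by_contra hcon
    push_neg at hcon
    choose! b2 hb2lt hb2 using hcon
    set βs : Ordinal.{u} := ⨆ G : ↥V, b2 G.1 with hβs
    have hβslt : βs < ω₂ := by
      apply Ordinal.iSup_lt_ord ?_ (fun G : ↥V => hb2lt G.1)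
      rw [hcof]
      exact lt_of_le_of_lt hVcard h12'
    obtain ⟨δ, hδD, hδge, hδsub⟩ := hUnb βs hβslt
    have hPV : P δ ∈ V := hδsub
    have hble : b2 (P δ) ≤ δ :=
      le_trans (Ordinal.le_iSup (fun G : ↥V => b2 G.1) ⟨P δ, hPV⟩) hδge
    exact hb2 (P δ) δ hδD hble hδsub rfl
  obtain ⟨Ps, hW⟩ := hpress2
  -- constant size of Z on an unbounded subset
  have hpress3 : ∃ ns : ℕ, ∀ β, β < ω₂ →
      ∃ δ, IsD δ ∧ β ≤ δ ∧ ↑(P δ) ⊆ T ηs ∧ P δ = Ps ∧ (Z δ).card = ns := by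
    by_contra hcon
    push_neg at hcon
    choose! b3 hb3lt hb3 using hcon
    set βs : Ordinal.{u} := ⨆ n : ℕ, b3 n with hβs
    have hβslt : βs < ω₂ := hsupN _ hb3lt
    obtain ⟨δ, hδD, hδge, hδsub, hδP⟩ := hW βs hβslt
    have hble : b3 ((Z δ).card) ≤ δ := le_trans (Ordinal.le_iSup (fun n : ℕ => b3 n) ((Z δ).card)) hδge
    exact hb3 ((Z δ).card) δ hδD hble hδsub hδP rfl
  obtain ⟨ns, hW2⟩ := hpress3
  set W2 : Set Ordinal.{u} := {δ | IsD δ ∧ ↑(P δ) ⊆ T ηs ∧ P δ = Ps ∧ (Z δ).card = ns}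
    with hW2def
  have hW2unb : ∀ β, β < ω₂ → ∃ δ ∈ W2, β ≤ δ := by
    intro β hβ
    obtain ⟨δ, h1, h2, h3, h4, h5⟩ := hW2 β hβ
    exact ⟨δ, ⟨h1, h3, h4, h5⟩, h2⟩
  set Unbdd : Set Ordinal.{u} → Prop := fun S => ∀ β, β < ω₂ → ∃ δ ∈ S, β ≤ δ with hUnbdd
  set Qual : ℕ → Prop := fun m => ∃ R : Finset ι, R.card = m ∧ Unbdd {δ ∈ W2 | R ⊆ Z δ}
    with hQual
  have hQ0 : Qual 0 := by
    refine ⟨∅, Finset.card_empty, ?_⟩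
    intro β hβ
    obtain ⟨δ, hδ, hge⟩ := hW2unb β hβ
    exact ⟨δ, ⟨hδ, Finset.empty_subset _⟩, hge⟩
  have hQbound : ∀ m, Qual m → m ≤ ns := by
    rintro m ⟨R, hcard, hunb⟩
    obtain ⟨δ, ⟨hδW2, hsub⟩, -⟩ := hunb 0 homega2limit.pos
    rw [← hcard, ← hδW2.2.2.2]
    exact Finset.card_le_card hsub
  set ms : ℕ := Nat.findGreatest Qual ns with hms
  have hmsQ : Qual ms := Nat.findGreatest_spec (Nat.zero_le ns) hQ0
  obtain ⟨R, hRcard, hRunb⟩ := hmsQ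
  have hmax : ∀ i, i ∉ R → ¬ Unbdd {δ ∈ W2 | insert i R ⊆ Z δ} := by
    intro i hiR hunb
    have hQ' : Qual (ms + 1) :=
      ⟨insert i R, by rw [Finset.card_insert_of_notMem hiR, hRcard], hunb⟩
    exact Nat.findGreatest_is_greatest (Nat.lt_succ_self ms) (hQbound _ hQ') hQ'
  set WR : Set Ordinal.{u} := {δ ∈ W2 | R ⊆ Z δ} with hWRdef
  have hfib : ∀ i, i ∉ R → ∃ β, β < ω₂ ∧ ∀ δ ∈ WR, i ∈ Z δ → δ < β := by
    intro i hiR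
    have hnu : ¬ ∀ β, β < ω₂ → ∃ δ ∈ {δ | δ ∈ W2 ∧ insert i R ⊆ Z δ}, β ≤ δ := hmax i hiR
    push_neg at hnu
    obtain ⟨β, hβlt, hall⟩ := hnu
    refine ⟨β, hβlt, fun δ hδ hiZ => ?_⟩
    exact hall δ ⟨hδ.1, Finset.insert_subset hiZ hδ.2⟩
  set Pdis : Set Ordinal.{u} → Prop := fun 𝒜 => 𝒜 ⊆ WR ∧
      𝒜.Pairwise (fun δ₁ δ₂ => Disjoint (Z δ₁ \ R) (Z δ₂ \ R)) with hPdis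
  obtain ⟨𝒟, h𝒟max⟩ : ∃ 𝒟, Maximal (· ∈ {𝒜 | Pdis 𝒜}) 𝒟 := by
    apply zorn_subset
    intro c hcS hchain
    refine ⟨⋃₀ c, ⟨?_, ?_⟩, fun s hs => subset_sUnion_of_mem hs⟩
    · exact sUnion_subset fun A hA => (hcS hA).1
    · intro δ₁ hδ₁ δ₂ hδ₂ hne
      obtain ⟨A₁, hA₁, hδ₁'⟩ := hδ₁
      obtain ⟨A₂, hA₂, hδ₂'⟩ := hδ₂
      rcases hchain.total hA₁ hA₂ with hsub | hsub
      · exact (hcS hA₂).2 (hsub hδ₁') hδ₂' hne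
      · exact (hcS hA₁).2 hδ₁' (hsub hδ₂') hne
  have h𝒟WR : 𝒟 ⊆ WR := h𝒟max.prop.1
  have h𝒟pair := h𝒟max.prop.2
  have hWRlt : ∀ δ ∈ WR, δ < ω₂ := fun δ hδ => hδ.1.1.1
  have hmaxcons : ∀ δ' ∈ WR, δ' ∉ 𝒟 → ∃ δ₀ ∈ 𝒟, ¬ Disjoint (Z δ' \ R) (Z δ₀ \ R) := by
    intro δ' hδ'WR hδ'not
    by_contra hc
    push_neg at hc
    have hS' : Pdis (insert δ' 𝒟) := by
      constructor
      · exact Set.insert_subset hδ'WR h𝒟WR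
      · refine h𝒟pair.insert ?_
        intro δ₀ hδ₀ hne
        exact ⟨hc δ₀ hδ₀, (hc δ₀ hδ₀).symm⟩
    have := h𝒟max.2 hS' (subset_insert _ _)
    exact hδ'not (this (mem_insert δ' 𝒟))
  choose! bf hbf1 hbf2 using hfib
  by_cases hcnt : 𝒟.Countable
  · -- in this case WR is bounded, contradiction
    obtain ⟨β₁, hβ₁lt, hβ₁⟩ : ∃ β₁, β₁ < ω₂ ∧ ∀ δ ∈ 𝒟, δ < β₁ := by
      rcases eq_empty_or_nonempty 𝒟 with rfl | hne
      · exact ⟨1, Ordinal.one_lt_of_isSuccLimit homega2limit, by simp⟩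
      · obtain ⟨f, hf⟩ := hcnt.exists_eq_range hne
        refine ⟨⨆ n, f n + 1, ?_, ?_⟩
        · apply hsupN
          intro n
          have hfn : f n ∈ 𝒟 := by rw [hf]; exact mem_range_self n
          rw [Ordinal.add_one_eq_succ]
          exact homega2limit.succ_lt (hWRlt _ (h𝒟WR hfn))
        · intro δ hδ
          rw [hf] at hδ
          obtain ⟨n, rfl⟩ := hδ
          calc f n < f n + 1 := by rw [Ordinal.add_one_eq_succ]; exact Order.lt_succ _
            _ ≤ ⨆ n, f n + 1 := Ordinal.le_iSup (fun n => f n + 1) n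
    set SS : Set ι := ⋃ δ₀ ∈ 𝒟, ↑(Z δ₀ \ R) with hSS
    have hSScnt : SS.Countable := hcnt.biUnion fun δ₀ _ => (Z δ₀ \ R).countable_toSet
    obtain ⟨β₂, hβ₂lt, hβ₂⟩ : ∃ β₂, β₂ < ω₂ ∧ ∀ i ∈ SS, bf i ≤ β₂ := by
      rcases eq_empty_or_nonempty SS with hSSe | hSSne
      · exact ⟨1, Ordinal.one_lt_of_isSuccLimit homega2limit, by rw [hSSe]; simp⟩
      · obtain ⟨f2, hf2⟩ := hSScnt.exists_eq_range hSSne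
        have hmemR : ∀ n, f2 n ∉ R := by
          intro n
          have : f2 n ∈ SS := by rw [hf2]; exact mem_range_self n
          obtain ⟨δ₀, -, hmem⟩ := mem_iUnion₂.mp this
          exact (Finset.mem_sdiff.mp (Finset.mem_coe.mp hmem)).2
        refine ⟨⨆ n, bf (f2 n), hsupN _ (fun n => hbf1 _ (hmemR n)), ?_⟩
        intro i hi
        rw [hf2] at hi
        obtain ⟨n, rfl⟩ := hi
        exact Ordinal.le_iSup (fun n => bf (f2 n)) n
    obtain ⟨δ', hδ'WR, hδ'ge⟩ := hRunb (max β₁ β₂) (max_lt hβ₁lt hβ₂lt)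
    by_cases hδ'mem : δ' ∈ 𝒟
    · exact absurd (lt_of_lt_of_le (hβ₁ δ' hδ'mem) (le_trans (le_max_left _ _) hδ'ge))
        (lt_irrefl δ')
    · obtain ⟨δ₀, hδ₀mem, hndis⟩ := hmaxcons δ' hδ'WR hδ'mem
      obtain ⟨i, hi1, hi2⟩ := Finset.not_disjoint_iff.mp hndis
      have hiSS : i ∈ SS := mem_iUnion₂.mpr ⟨δ₀, hδ₀mem, Finset.mem_coe.mpr hi2⟩
      have hiR : i ∉ R := (Finset.mem_sdiff.mp hi1).2
      have hlt : δ' < bf i := hbf2 i hiR δ' hδ'WR (Finset.mem_sdiff.mp hi1).1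
      have : δ' < β₂ := lt_of_lt_of_le hlt (hβ₂ i hiSS)
      exact absurd (lt_of_lt_of_le this (le_trans (le_max_right _ _) hδ'ge)) (lt_irrefl δ')
  · -- uncountable case : extract ω₁-many and contradict countable support
    set W1 := (aleph.{u} 1).ord.ToType with hW1
    have hW1card : #W1 = aleph 1 := by rw [hW1, Cardinal.mk_toType, Cardinal.card_ord]
    have hlift : Cardinal.lift.{u+1} #W1 ≤ Cardinal.lift.{u} #↥𝒟 := by
      have h1 : (aleph.{u+1} 1) ≤ #↥𝒟 := by
        rw [← succ_aleph0, Order.succ_le_iff]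
        exact lt_of_not_ge (fun hle => hcnt (countable_coe_iff.mp (mk_le_aleph0_iff.mp hle)))
      have h2 : Cardinal.lift.{u+1} #W1 = aleph.{u+1} 1 := by
        rw [hW1card, lift_aleph, Ordinal.lift_one]
      rw [h2]
      simpa using h1
    obtain ⟨emb⟩ := Cardinal.lift_mk_le'.mp hlift
    set w : W1 → Ordinal.{u} := fun v => (emb v).1 with hw
    have hwWR : ∀ v, w v ∈ WR := fun v => h𝒟WR (emb v).2
    have hwinj : Function.Injective w := by
      intro v₁ v₂ hv
      exact emb.injective (Subtype.ext hv)
    set δhat : Ordinal.{u} := ⨆ v : W1, w v + 1 with hδhat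
    have hδhatlt : δhat < ω₂ := by
      apply Ordinal.iSup_lt_ord ?_ ?_
      · rw [hcof, hW1card]; exact h12'
      · intro v
        rw [Ordinal.add_one_eq_succ]
        exact homega2limit.succ_lt (hWRlt _ (hwWR v))
    have hwlt : ∀ v, w v < δhat := fun v =>
      lt_of_lt_of_le (by rw [Ordinal.add_one_eq_succ]; exact Order.lt_succ _)
        (Ordinal.le_iSup (fun v => w v + 1) v)
    have hsucclt : Order.succ δhat < ω₂ := homega2limit.succ_lt hδhatlt
    obtain ⟨δ', hδ'WR, hδ'ge⟩ := hRunb (Order.succ δhat) hsucclt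
    have hδhatδ' : δhat < δ' := lt_of_lt_of_le (Order.lt_succ _) hδ'ge
    have hδ'D : IsD δ' := hδ'WR.1.1
    have hδ'lt : δ' < ω₂ := hδ'D.1
    have hcl := hz1 δ' hδ'D δhat hδhatδ'
    obtain ⟨s, hsmem, hsmatch⟩ := (mem_closure_sub_iff).mp hcl (Ff δ')
    obtain ⟨γ, ⟨hγ1, hγ2⟩, rfl⟩ := hsmem
    have hγlt : γ < ω₂ := lt_trans hγ2 hδ'lt
    have hPδ' : P δ' = Ps := hδ'WR.1.2.2.1
    have hkey : ∀ v : W1, ∃ i, i ∈ Z (w v) \ R ∧ (a γ : ι → Bool) i = true := by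
      intro v
      have hvWR := hwWR v
      have hvW2 : w v ∈ W2 := hvWR.1
      have hvD : IsD (w v) := hvW2.1
      have hvP : P (w v) = Ps := hvW2.2.2.1
      have hvlt : w v < δhat := hwlt v
      have hele : e (w v) ≤ e γ :=
        he_le (hWRlt _ hvWR) hγlt (le_of_lt (lt_of_lt_of_le hvlt hγ1))
      obtain ⟨i, hiF, hine⟩ := hz3 (w v) hvD (e γ) hele
      have hine' : (a γ : ι → Bool) i ≠ (zf (w v) : ι → Bool) i := hine
      by_cases hzv : (zf (w v) : ι → Bool) i = true
      · exfalso
        have hiP : i ∈ P (w v) := Finset.mem_filter.mpr ⟨hiF, hzv⟩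
        rw [hvP, ← hPδ'] at hiP
        have hiFδ' : i ∈ Ff δ' := (Finset.mem_filter.mp hiP).1
        have hmatchi : (a γ : ι → Bool) i = (zf δ' : ι → Bool) i := hsmatch i hiFδ'
        have hz' : (zf δ' : ι → Bool) i = true := (Finset.mem_filter.mp hiP).2
        rw [hz'] at hmatchi
        rw [hzv] at hine'
        exact hine' hmatchi
      · have hzfalse : (zf (w v) : ι → Bool) i = false := by
          cases h : (zf (w v) : ι → Bool) i
          · rfl
          · exact absurd h hzv
        have hiZ : i ∈ Z (w v) := Finset.mem_filter.mpr ⟨hiF, hzfalse⟩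
        have hatrue : (a γ : ι → Bool) i = true := by
          rw [hzfalse] at hine'
          cases h : (a γ : ι → Bool) i
          · exact absurd h hine'
          · rfl
        have hiR : i ∉ R := by
          intro hiRmem
          have hiZδ' : i ∈ Z δ' := hδ'WR.2 hiRmem
          have hiFδ' : i ∈ Ff δ' := (Finset.mem_filter.mp hiZδ').1
          have h1 : (a γ : ι → Bool) i = (zf δ' : ι → Bool) i := hsmatch i hiFδ'
          have h2 : (zf δ' : ι → Bool) i = false := (Finset.mem_filter.mp hiZδ').2
          rw [h2, hatrue] at h1
          exact Bool.true_eq_false.mp h1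
        exact ⟨i, Finset.mem_sdiff.mpr ⟨hiZ, hiR⟩, hatrue⟩
    choose If hIf1 hIf2 using hkey
    have hIinj : Function.Injective If := by
      intro v₁ v₂ hv
      by_contra hne
      have hne' : w v₁ ≠ w v₂ := fun h => hne (hwinj h)
      have hd := h𝒟pair (emb v₁).2 (emb v₂).2 hne'
      exact Finset.disjoint_left.mp hd (hIf1 v₁) (hv ▸ hIf1 v₂)
    have hle : aleph 1 ≤ ℵ₀ := by
      rw [← hW1card]
      have hinj2 : #W1 ≤ #(asupp γ) :=
        mk_le_of_injective (f := fun v => (⟨If v, hIf2 v⟩ : ↥(asupp γ)))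
          (fun v₁ v₂ h => hIinj (congrArg Subtype.val h))
      exact le_trans hinj2 (mk_le_aleph0_iff.mpr (hasupp γ).to_subtype)
    exact absurd hle (not_le.mpr aleph0_lt_aleph_one)

/-- For `κ > ω₁`, let `Y = {x ∈ 2^κ : |x⁻¹(1)| ≤ ℵ₀}` and `X = Y ∪ {𝟏}` with the subspace
topology from `2^κ`, where `𝟏` is the constant-one function. Then `X` is countably compact,
`t(X) = κ` (the tightness is at most `κ` but not at most any smaller cardinal), and
`F(X) ≤ ω₁`. -/
theorem countably_compact_small_free_sequences_large_tightness
    (κ : Cardinal.{u}) (hκ : aleph 1 < κ)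
    (ι : Type u) (hι : #ι = κ)
    (X : Set (ι → Bool))
    (hX : X = {x | {i | x i = true}.Countable} ∪ {fun _ => true}) :
    CountablyCompact ↥X ∧
    TightnessLE ↥X κ ∧ (∀ μ : Cardinal.{u}, μ < κ → ¬ TightnessLE ↥X μ) ∧
    FreeSequencesLE ↥X (aleph 1) :=
  ⟨part1 X hX, part2 X κ hι hκ, part3 X κ hι hκ hX, part4 X hX⟩
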